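/- Let A be a binary matrix with n columns, A' the matrix with a zero column appended, and D the Hamming distance matrix of the columns of A'. For every column permutation π of A, the tour of A' consisting of the zero column followed by the columns of A in the order π has length exactly 2·cons1(π(A)); hence the minimum tour length over all tours of A' equals 2·min_π cons1(π(A)). -/

import Mathlib

open Finset

/-- Extend a row of length `n` by zeros to an `ℕ`-indexed row. -/
def rowExt (n : ℕ) (r : Fin n → Bool) : ℕ → Bool :=
  fun j => if h : j < n then r ⟨j, h⟩ else false

/-- The number of maximal blocks of consecutive ones in a row. -/
def cons1Row (n : ℕ) (r : Fin n → Bool) : ℕ :=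
  ((Finset.range n).filter
    (fun j => rowExt n r j = true ∧ (j = 0 ∨ rowExt n r (j - 1) = false))).card

/-- The total number of maximal blocks of consecutive ones in a binary matrix. -/
def cons1 {m n : ℕ} (A : Fin m → Fin n → Bool) : ℕ :=
  ∑ i, cons1Row n (A i)

/-- Append a column of zeros to the right of a binary matrix. -/
def appendZero {m n : ℕ} (A : Fin m → Fin n → Bool) : Fin m → Fin (n + 1) → Bool :=
  fun i j => if h : (j : ℕ) < n then A i ⟨j, h⟩ else false

/-- Hamming distance between two columns of a binary matrix. -/
def colHam {m N : ℕ} (B : Fin m → Fin N → Bool) (a b : Fin N) : ℕ :=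
  hammingDist (fun i => B i a) (fun i => B i b)

/-- The tour of the columns of A' consisting of the zero column followed by the
columns of A in the order π. -/
def zeroTour {n : ℕ} (π : Equiv.Perm (Fin n)) : Fin (n + 1) → Fin (n + 1) :=
  fun k => if h : (k : ℕ) = 0 then Fin.last n
    else (π ⟨(k : ℕ) - 1, by have := k.isLt; omega⟩).castSucc

/- ### Auxiliary material -/

lemma keyg (g : ℕ → Bool) (h0 : g 0 = false) :
    ∀ n, ((∑ j ∈ range n, if g j ≠ g (j+1) then 1 else 0) + (if g n = true then 1 else 0)
      = 2 * ((range n).filter (fun j => g (j+1) = true ∧ g j = false)).card) := by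
  intro n
  induction n with
  | zero => simp [h0]
  | succ n ih =>
    rw [Finset.sum_range_succ, Finset.range_add_one, Finset.filter_insert]
    by_cases hc : g (n+1) = true ∧ g n = false
    · rw [if_pos hc, Finset.card_insert_of_notMem (by simp)]
      obtain ⟨h1, h2⟩ := hc
      simp [h1, h2] at ih ⊢
      omega
    · rw [if_neg hc]
      cases hg1 : g n <;> cases hg2 : g (n+1) <;>
        simp [hg1, hg2] at ih hc ⊢ <;> omega

def gfun (n : ℕ) (r : Fin n → Bool) : ℕ → Bool :=
  fun j => if j = 0 then false else rowExt n r (j-1)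

lemma rowKey (n : ℕ) (r : Fin n → Bool) :
    (∑ k : Fin (n+1), if gfun n r (k : ℕ) ≠ gfun n r (((k+1 : Fin (n+1)) : ℕ)) then 1 else 0)
      = 2 * cons1Row n r := by
  have hsucc : gfun n r (n+1) = false := by
    simp [gfun, rowExt]
  have hterm : ∀ k : Fin (n+1),
      (if gfun n r (k : ℕ) ≠ gfun n r (((k+1 : Fin (n+1)) : ℕ)) then 1 else 0) =
      (if gfun n r (k : ℕ) ≠ gfun n r ((k : ℕ)+1) then 1 else 0) := by
    intro k
    by_cases hk : (k : ℕ) < n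
    · congr 2
      rw [Fin.val_add_one_of_lt]
      rwa [Fin.lt_iff_val_lt_val, Fin.val_last]
    · have hk' : (k : ℕ) = n := by omega
      have : k = Fin.last n := Fin.ext hk'
      rw [this]
      have h1 : ((Fin.last n + 1 : Fin (n+1)) : ℕ) = 0 := by simp
      have h2 : gfun n r 0 = false := by simp [gfun]
      simp only [Fin.val_last, h1, h2, hsucc]
  rw [Finset.sum_congr rfl (fun k _ => hterm k),
    Fin.sum_univ_eq_sum_range (fun j => if gfun n r j ≠ gfun n r (j+1) then 1 else 0)]
  have hk := keyg (gfun n r) (by simp [gfun]) (n+1)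
  rw [hsucc] at hk
  simp only [if_neg (by simp : ¬ (false = true))] at hk
  rw [add_zero] at hk
  rw [hk]
  congr 1
  rw [Finset.range_add_one, Finset.filter_insert, if_neg (by simp [hsucc])]
  unfold cons1Row
  congr 1
  apply Finset.filter_congr
  intro j hj
  simp only [Finset.mem_range] at hj
  constructor
  · rintro ⟨h1, h2⟩
    have : gfun n r (j+1) = rowExt n r j := by simp [gfun]
    rw [this] at h1
    refine ⟨h1, ?_⟩
    rcases Nat.eq_zero_or_pos j with h | h
    · exact Or.inl h
    · right
      have : gfun n r j = rowExt n r (j-1) := by simp [gfun, Nat.pos_iff_ne_zero.mp h]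
      rw [← this]; exact h2
  · rintro ⟨h1, h2⟩
    constructor
    · simpa [gfun] using h1
    · rcases h2 with h | h
      · simp [gfun, h]
      · simp [gfun]
        intro _; exact h

lemma tourLen {m n : ℕ} (A : Fin m → Fin n → Bool) (π : Equiv.Perm (Fin n)) :
    ∑ k : Fin (n + 1), colHam (appendZero A) (zeroTour π k) (zeroTour π (k + 1)) =
      2 * cons1 (fun i j => A i (π j)) := by
  have hval : ∀ (i : Fin m) (k : Fin (n+1)),
      appendZero A i (zeroTour π k) = gfun n (fun j => A i (π j)) (k : ℕ) := by
    intro i k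
    by_cases hk : (k : ℕ) = 0
    · simp [zeroTour, hk, appendZero, gfun]
    · have hlt : (k : ℕ) - 1 < n := by have := k.isLt; omega
      simp only [zeroTour, dif_neg hk, gfun, if_neg hk, rowExt, dif_pos hlt]
      simp [appendZero]
  have hcol : ∀ a b : Fin (n+1), colHam (appendZero A) a b =
      ∑ i, if appendZero A i a ≠ appendZero A i b then 1 else 0 := by
    intro a b
    rw [colHam, hammingDist, Finset.card_filter]
  calc ∑ k : Fin (n + 1), colHam (appendZero A) (zeroTour π k) (zeroTour π (k + 1))
      = ∑ k : Fin (n+1), ∑ i, (if appendZero A i (zeroTour π k) ≠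
          appendZero A i (zeroTour π (k+1)) then 1 else 0) := by
        exact Finset.sum_congr rfl (fun k _ => hcol _ _)
    _ = ∑ i, ∑ k : Fin (n+1), (if appendZero A i (zeroTour π k) ≠
          appendZero A i (zeroTour π (k+1)) then 1 else 0) := Finset.sum_comm
    _ = ∑ i, 2 * cons1Row n (fun j => A i (π j)) := by
        refine Finset.sum_congr rfl (fun i _ => ?_)
        rw [← rowKey n (fun j => A i (π j))]
        exact Finset.sum_congr rfl (fun k _ => by rw [hval i k, hval i (k+1)])
    _ = 2 * cons1 (fun i j => A i (π j)) := by
        rw [cons1, Finset.mul_sum]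

lemma zeroTour_injective {n : ℕ} (π : Equiv.Perm (Fin n)) :
    Function.Injective (zeroTour π) := by
  intro k k' h
  unfold zeroTour at h
  by_cases h1 : (k : ℕ) = 0 <;> by_cases h2 : (k' : ℕ) = 0
  · exact Fin.ext (h1.trans h2.symm)
  · rw [dif_pos h1, dif_neg h2] at h
    exact absurd h.symm (Fin.castSucc_lt_last _).ne
  · rw [dif_neg h1, dif_pos h2] at h
    exact absurd h (Fin.castSucc_lt_last _).ne
  · rw [dif_neg h1, dif_neg h2] at h
    have := π.injective (Fin.castSucc_injective n h)
    have hv : (k : ℕ) - 1 = (k' : ℕ) - 1 := Fin.mk.inj_iff.mp this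
    exact Fin.ext (by omega)

/-- `zeroTour π` as a permutation. -/
noncomputable def zeroTourPerm {n : ℕ} (π : Equiv.Perm (Fin n)) : Equiv.Perm (Fin (n+1)) :=
  Equiv.ofBijective (zeroTour π) ((Finite.injective_iff_bijective).mp (zeroTour_injective π))

lemma zeroTourPerm_apply {n : ℕ} (π : Equiv.Perm (Fin n)) (k : Fin (n+1)) :
    zeroTourPerm π k = zeroTour π k := rfl

theorem stmt19 (m n : ℕ) (A : Fin m → Fin n → Bool) :
    (∀ π : Equiv.Perm (Fin n),
        ∑ k : Fin (n + 1), colHam (appendZero A) (zeroTour π k) (zeroTour π (k + 1)) =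
          2 * cons1 (fun i j => A i (π j))) ∧
      sInf {L : ℕ | ∃ σ : Equiv.Perm (Fin (n + 1)),
          L = ∑ k : Fin (n + 1), colHam (appendZero A) (σ k) (σ (k + 1))} =
        2 * sInf {c : ℕ | ∃ π : Equiv.Perm (Fin n), c = cons1 (fun i j => A i (π j))} := by
  constructor
  · exact tourLen A
  · set S : Set ℕ := {L : ℕ | ∃ σ : Equiv.Perm (Fin (n + 1)),
      L = ∑ k : Fin (n + 1), colHam (appendZero A) (σ k) (σ (k + 1))} with hSdef
    set T : Set ℕ := {c : ℕ | ∃ π : Equiv.Perm (Fin n), c = cons1 (fun i j => A i (π j))}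
      with hTdef
    have hSne : S.Nonempty := ⟨_, 1, rfl⟩
    have hTne : T.Nonempty := ⟨_, 1, rfl⟩
    -- every tour length is 2 * cons1 of some permutation
    have hrot : ∀ L ∈ S, ∃ π : Equiv.Perm (Fin n), L = 2 * cons1 (fun i j => A i (π j)) := by
      rintro L ⟨σ, hσ⟩
      -- rotate σ so that the zero column comes first
      set p : Fin (n+1) := σ⁻¹ (Fin.last n) with hp
      set σ' : Equiv.Perm (Fin (n+1)) := (Equiv.addRight p).trans σ with hσ'
      have hσ'app : ∀ k, σ' k = σ (k + p) := fun k => rfl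
      have hσ'0 : σ' 0 = Fin.last n := by
        rw [hσ'app, zero_add, hp]; simp
      have hLrot : L = ∑ k : Fin (n + 1), colHam (appendZero A) (σ' k) (σ' (k + 1)) := by
        rw [hσ]
        have := Equiv.sum_comp (Equiv.addRight p)
          (fun k => colHam (appendZero A) (σ k) (σ (k + 1)))
        rw [← this]
        refine Finset.sum_congr rfl (fun k _ => ?_)
        simp only [Equiv.coe_addRight, hσ'app]
        congr 2
        rw [add_right_comm]
      -- extract π from σ'
      have hne : ∀ j : Fin n, σ' j.succ ≠ Fin.last n := by
        intro j hj
        have : j.succ = (0 : Fin (n+1)) := σ'.injective (hj.trans hσ'0.symm)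
        exact (Fin.succ_ne_zero j) this
      set π0 : Fin n → Fin n := fun j => (σ' j.succ).castPred (hne j) with hπ0
      have hπ0inj : Function.Injective π0 := by
        intro j j' h
        have : σ' j.succ = σ' j'.succ := by
          rw [← Fin.castSucc_castPred (σ' j.succ) (hne j),
            ← Fin.castSucc_castPred (σ' j'.succ) (hne j')]
          exact congrArg Fin.castSucc h
        exact Fin.succ_injective n (σ'.injective this)
      set π : Equiv.Perm (Fin n) :=
        Equiv.ofBijective π0 ((Finite.injective_iff_bijective).mp hπ0inj) with hπdef
      have hπapp : ∀ j, π j = π0 j := fun j => rfl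
      have hagree : ∀ k : Fin (n+1), zeroTour π k = σ' k := by
        intro k
        by_cases hk : (k : ℕ) = 0
        · have hk0 : k = 0 := Fin.ext hk
          subst hk0
          simp only [zeroTour, Fin.val_zero, dif_pos, hσ'0]
          exact dif_pos rfl
        · rw [zeroTour, dif_neg hk, hπapp, hπ0]
          have hks : (⟨(k : ℕ) - 1, by have := k.isLt; omega⟩ : Fin n).succ = k := by
            apply Fin.ext
            simp [Fin.val_succ]
            omega
          rw [Fin.castSucc_castPred, hks]
      refine ⟨π, ?_⟩
      rw [hLrot, ← tourLen A π]
      exact Finset.sum_congr rfl (fun k _ => by rw [hagree k, hagree (k+1)])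
    have h1 : 2 * sInf T ∈ S := by
      obtain ⟨π, hπ⟩ := Nat.sInf_mem hTne
      refine ⟨zeroTourPerm π, ?_⟩
      have : ∑ k : Fin (n + 1), colHam (appendZero A) (zeroTourPerm π k) (zeroTourPerm π (k + 1))
          = ∑ k : Fin (n + 1), colHam (appendZero A) (zeroTour π k) (zeroTour π (k + 1)) := rfl
      rw [this, tourLen A π, ← hπ]
    have le1 : sInf S ≤ 2 * sInf T := Nat.sInf_le h1
    have le2 : 2 * sInf T ≤ sInf S := by
      obtain ⟨π, hπ⟩ := hrot _ (Nat.sInf_mem hSne)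
      have : sInf T ≤ cons1 (fun i j => A i (π j)) := Nat.sInf_le ⟨π, rfl⟩
      omega
    omega
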